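/- arXiv:1905.08981 — 5 statements merged into one kernel-verified Lean document; each statement's English description precedes it below -/
import Mathlib

section
/- Let v : ℤ≥0 → ℤ≥0 satisfy v(m)/m → 0 as m → ∞, and let ρ : Z × Z → ℝ≥0 be a symmetric kernel vanishing only on the diagonal with ρ(x,z) ≤ exp(v(min(−log ρ(x,y), −log ρ(y,z)))) · max(ρ(x,y), ρ(y,z)) for all x,y,z. Setting E_n = {(x,y) : ρ(x,y) ≤ e^{-n}}, for every n ∈ ℤ there exists m ∈ ℤ such that (x,y) ∈ E_m and (y,z) ∈ E_m imply (x,z) ∈ E_n; indeed m = max(2n, 2·sup{m' : v(m') ≥ m'/2}) works. -/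
/-- sublinear quasi-triangle inequality `(△_{O(u)})` still yields the
composition axiom (U'_III) for the entourages `E_n = {ρ ≤ e^{-n}}`. -/
theorem stmt_4 {Z : Type*} (v : ℕ → ℕ)
    (hsub : Filter.Tendsto (fun m : ℕ => (v m : ℝ) / m) Filter.atTop (nhds 0))
    (ρ : Z → Z → ℝ) (hnn : ∀ x y, 0 ≤ ρ x y) (heq : ∀ x y, ρ x y = 0 ↔ x = y)
    (hsymm : ∀ x y, ρ x y = ρ y x)
    (htri : ∀ x y z : Z, x ≠ y → y ≠ z →
      ρ x z ≤ Real.exp (v ⌊min (-Real.log (ρ x y)) (-Real.log (ρ y z))⌋₊) *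
        max (ρ x y) (ρ y z)) :
    ∀ n : ℤ, ∃ m : ℤ, ∀ x y z : Z,
      ρ x y ≤ Real.exp (-(m : ℝ)) → ρ y z ≤ Real.exp (-(m : ℝ)) →
      ρ x z ≤ Real.exp (-(n : ℝ)) := by
  intro n
  have hev : ∀ᶠ m : ℕ in Filter.atTop, (v m : ℝ) / m < 1/2 :=
    hsub.eventually_lt_const (by norm_num : (0:ℝ) < 1/2)
  obtain ⟨M, hM⟩ := Filter.eventually_atTop.1 hev
  set K : ℕ := max M 1 with hK
  refine ⟨max (2*n) (K : ℤ), ?_⟩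
  set m : ℤ := max (2*n) (K : ℤ) with hm
  have hKm : (K : ℤ) ≤ m := le_max_right _ _
  have hK1 : (1 : ℕ) ≤ K := le_max_right _ _
  have hm1 : (1:ℤ) ≤ m := le_trans (by exact_mod_cast hK1) hKm
  have hnm : n ≤ m := by omega
  have hnmR : Real.exp (-(m:ℝ)) ≤ Real.exp (-(n:ℝ)) := by
    apply Real.exp_le_exp.2; simp only [neg_le_neg_iff]; exact_mod_cast hnm
  intro x y z hxy hyz
  by_cases hxy' : x = y
  · subst hxy'; exact le_trans hyz hnmR
  by_cases hyz' : y = z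
  · subst hyz'; exact le_trans hxy hnmR
  have hρxy : 0 < ρ x y := lt_of_le_of_ne (hnn x y) (fun h => hxy' ((heq x y).1 h.symm))
  have hρyz : 0 < ρ y z := lt_of_le_of_ne (hnn y z) (fun h => hyz' ((heq y z).1 h.symm))
  set t : ℝ := min (-Real.log (ρ x y)) (-Real.log (ρ y z)) with ht
  have hlog1 : (m:ℝ) ≤ -Real.log (ρ x y) := by
    have := Real.log_le_log hρxy hxy
    rw [Real.log_exp] at this; linarith
  have hlog2 : (m:ℝ) ≤ -Real.log (ρ y z) := by
    have := Real.log_le_log hρyz hyz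
    rw [Real.log_exp] at this; linarith
  have hmt : (m:ℝ) ≤ t := le_min hlog1 hlog2
  have hm0 : (0:ℤ) ≤ m := by omega
  have hcast : (m.toNat : ℝ) = (m : ℝ) := by exact_mod_cast Int.toNat_of_nonneg hm0
  have ht0 : 0 ≤ t := le_trans (by exact_mod_cast hm0) hmt
  set m' : ℕ := ⌊t⌋₊ with hm'
  have hmm' : (m:ℝ) ≤ (m' : ℝ) := by
    have h1 : m.toNat ≤ m' := Nat.le_floor (by rw [hcast]; exact hmt)
    rw [← hcast]; exact_mod_cast h1
  have hMm' : M ≤ m' := by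
    have h1 : m.toNat ≤ m' := by
      apply Nat.le_floor
      rw [hcast]; exact hmt
    have h2 : K ≤ m.toNat := by omega
    omega
  have hvm' : (v m' : ℝ) < (m' : ℝ) / 2 := by
    have h := hM m' hMm'
    have hm'1 : (1:ℝ) ≤ (m' : ℝ) := by
      have : (1:ℝ) ≤ (m:ℝ) := by exact_mod_cast hm1
      linarith
    rw [div_lt_iff₀ (by linarith)] at h
    rw [lt_div_iff₀ (by norm_num : (0:ℝ) < 2)]
    linarith
  have htm' : (m' : ℝ) ≤ t := Nat.floor_le ht0
  have hmax : max (ρ x y) (ρ y z) ≤ Real.exp (-t) := by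
    apply max_le
    · calc ρ x y = Real.exp (Real.log (ρ x y)) := (Real.exp_log hρxy).symm
        _ ≤ Real.exp (-t) := Real.exp_le_exp.2 (by have := min_le_left (-Real.log (ρ x y)) (-Real.log (ρ y z)); linarith)
    · calc ρ y z = Real.exp (Real.log (ρ y z)) := (Real.exp_log hρyz).symm
        _ ≤ Real.exp (-t) := Real.exp_le_exp.2 (by have := min_le_right (-Real.log (ρ x y)) (-Real.log (ρ y z)); linarith)
  calc ρ x z ≤ Real.exp (v ⌊t⌋₊) * max (ρ x y) (ρ y z) := htri x y z hxy' hyz'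
    _ ≤ Real.exp (v m') * Real.exp (-t) := by
        apply mul_le_mul_of_nonneg_left hmax (Real.exp_nonneg _)
    _ = Real.exp ((v m' : ℝ) - t) := by rw [← Real.exp_add]; ring_nf
    _ ≤ Real.exp (-(n:ℝ)) := by
        apply Real.exp_le_exp.2
        have h2n : (2*n : ℝ) ≤ (m:ℝ) := by exact_mod_cast (le_max_left (2*n) (K:ℤ) : (2*n:ℤ) ≤ m)
        push_cast at h2n
        linarith
end

section
/- Covering lemma for O(u)-quasisymmetric structures: let (Z, β, q, δ) be a set with an O(u)-quasisymmetric structure, let A ⊆ Z, and let 𝓑 ⊆ β be a countable cover of A (meaning the realizations of the balls in 𝓑 cover A) with inf_{b ∈ 𝓑} δ(b) > −∞. Then there exists 𝓒 ⊆ 𝓑 such that the realizations of distinct members of 𝓒 are pairwise disjoint, and the realizations of the shifted balls {q(δ(b)).b : b ∈ 𝓒} cover A. -/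
/-- An `O(u)`-quasisymmetric structure on a set `Z` (Definition 1.1 of the paper):
abstract balls with a realization map, a level map `lev = δ`, a shift action of `ℕ`,
satisfying (SC0), (SC1), (SC2) (with `q = O(u)`) and (SC3). -/
structure QSStruct (Z : Type*) where
  Ball : Type*
  rel : Ball → Set Z
  rel_nonempty : ∀ b, (rel b).Nonempty
  lev : Ball → ℤ
  shift : ℕ → Ball → Ball
  shift_add : ∀ k k' b, shift k' (shift k b) = shift (k' + k) b
  lev_shift : ∀ k b, lev (shift k b) = lev b - k
  subset_shift : ∀ k b, rel b ⊆ rel (shift k b)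
  shift_mono : ∀ k b b', rel b ⊆ rel b' → rel (shift k b) ⊆ rel (shift k b')
  lev_antichain : ∀ b b', lev b < lev b' → ¬ rel b ⊆ rel b'
  n₀ : ℤ
  q : ℤ → ℕ
  u : ℤ → ℝ
  q_bigO : ∃ C : ℝ, ∀ n : ℤ, n₀ ≤ n → (q n : ℝ) ≤ C * u n
  sc2 : ∀ b b', n₀ ≤ lev b → lev b ≤ lev b' → (rel b ∩ rel b').Nonempty →
    rel b' ⊆ rel (shift (q (lev b)) b)
  sc3 : ∀ x y : Z, x ≠ y → ∀ n : ℤ, ∃ b, n ≤ lev b ∧ x ∈ rel b ∧ y ∉ rel b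

/-- covering lemma: from a countable cover `𝓑 ⊆ β` of `A` with levels
bounded below one can extract a disjoint subfamily `𝓒` whose `q`-shifts cover `A`. -/
theorem stmt_5 {Z : Type*} (S : QSStruct Z) (A : Set Z) (𝓑 : Set S.Ball)
    (hcount : 𝓑.Countable) (hcover : A ⊆ ⋃ b ∈ 𝓑, S.rel b)
    (hbdd : BddBelow (S.lev '' 𝓑)) (hlev : ∀ b ∈ 𝓑, S.n₀ ≤ S.lev b) :
    ∃ 𝓒 ⊆ 𝓑, (∀ b ∈ 𝓒, ∀ b' ∈ 𝓒, b ≠ b' → Disjoint (S.rel b) (S.rel b')) ∧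
      A ⊆ ⋃ b ∈ 𝓒, S.rel (S.shift (S.q (S.lev b)) b) := by
    classical
  rcases Set.eq_empty_or_nonempty 𝓑 with h𝓑 | h𝓑
  · refine ⟨∅, by simp, by simp, fun x hx => ?_⟩
    have := hcover hx
    simp [h𝓑] at this
  obtain ⟨f, hf⟩ := (Set.countable_iff_exists_surjective h𝓑).mp hcount
  obtain ⟨m, hm⟩ := hbdd
  let idx : 𝓑 → ℕ := fun b => Nat.find (hf b)
  have idx_spec : ∀ b : 𝓑, f (idx b) = b := fun b => Nat.find_spec (hf b)
  have idx_inj : Function.Injective idx := by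
    intro a b h
    have ha := idx_spec a
    rw [h, idx_spec b] at ha
    exact ha.symm
  have hmlev : ∀ b : 𝓑, m ≤ S.lev b.1 := fun b => hm ⟨b.1, b.2, rfl⟩
  let μ : 𝓑 → ℕ ×ₗ ℕ := fun b => toLex ((S.lev b.1 - m).toNat, idx b)
  have μ_inj : Function.Injective μ := by
    intro a b h
    have : idx a = idx b := congrArg (fun p => (ofLex p).2) h
    exact idx_inj this
  let r : 𝓑 → 𝓑 → Prop := fun a b => μ a < μ b
  have wf : WellFounded r := InvImage.wf μ (wellFounded_lt)
  have r_lev : ∀ a b : 𝓑, r a b → S.lev a.1 ≤ S.lev b.1 := by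
    intro a b hab
    have ha := hmlev a
    have hb := hmlev b
    rcases Prod.Lex.lt_iff.mp hab with h1 | ⟨h1, _⟩ <;> simp only [μ, ofLex_toLex] at h1 <;> omega
  let F : ∀ b : 𝓑, (∀ b', r b' b → Prop) → Prop :=
    fun b ih => ∀ b', (h : r b' b) → ih b' h → Disjoint (S.rel b'.1) (S.rel b.1)
  let C : 𝓑 → Prop := wf.fix F
  have C_eq : ∀ b, C b = ∀ b', (h : r b' b) → C b' → Disjoint (S.rel b'.1) (S.rel b.1) :=
    fun b => wf.fix_eq F b
  refine ⟨{x | ∃ h : x ∈ 𝓑, C ⟨x, h⟩}, fun x hx => hx.1, ?_, ?_⟩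
  · rintro b ⟨hb, hCb⟩ b' ⟨hb', hCb'⟩ hne
    have hne' : (⟨b, hb⟩ : 𝓑) ≠ ⟨b', hb'⟩ := by simp [hne]
    have hμ : μ ⟨b, hb⟩ ≠ μ ⟨b', hb'⟩ := fun h => hne' (μ_inj h)
    rcases lt_or_gt_of_ne hμ with h | h
    · exact (C_eq ⟨b', hb'⟩ ▸ hCb') ⟨b, hb⟩ h hCb
    · exact ((C_eq ⟨b, hb⟩ ▸ hCb) ⟨b', hb'⟩ h hCb').symm
  · intro x hx
    obtain ⟨b, hb, hxb⟩ := Set.mem_iUnion₂.mp (hcover hx)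
    by_cases hC : C ⟨b, hb⟩
    · exact Set.mem_iUnion₂.mpr ⟨b, ⟨hb, hC⟩, S.subset_shift _ b hxb⟩
    · rw [C_eq] at hC
      push_neg at hC
      obtain ⟨p, hrp, hCp, hnd⟩ := hC
      obtain ⟨y, hy1, hy2⟩ := Set.not_disjoint_iff.mp hnd
      have hsub : S.rel b ⊆ S.rel (S.shift (S.q (S.lev p.1)) p.1) :=
        S.sc2 p.1 b (hlev p.1 p.2) (r_lev p ⟨b, hb⟩ hrp) ⟨y, hy1, hy2⟩
      exact Set.mem_iUnion₂.mpr ⟨p.1, ⟨p.2, hCp⟩, hsub hxb⟩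
end

section
/- Capacity dominates modulus: let (C, ∂₀C, ∂₁C) be a condenser in an open subset Ω of an O(u)-quasisymmetric structure, and let Γ be any family of curves joining ∂₀C and ∂₁C inside C. If f is a continuous real-valued function on Ω with f ≤ 0 on ∂₀C and f ≥ 1 on ∂₁C, then the gauge φ(a) = diam f(a) is admissible for Γ (i.e. every γ ∈ Γ has Carathéodory 1-measure ≥ 1 with this gauge). Consequently pmod^{ℓ,m}_{p;k}(Γ) ≤ cap^ℓ_{p;k}(C). -/
open Metric Set
open scoped ENNReal

noncomputable section

/-- A `(m,n)`-round set for the quasisymmetric structure of a metric space. -/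
def IsRoundSet {Z : Type*} [MetricSpace Z] (m : ℤ → ℕ) (n : ℤ) (a : Set Z) : Prop :=
  ∃ (x : Z) (j : ℤ), n ≤ j ∧ closedBall x (Real.exp (-(j : ℝ))) ⊆ a ∧
    a ⊆ closedBall x (Real.exp (-((j : ℝ) - m j)))

/-- The Carathéodory measure `Φ_{1;m}` associated with a gauge `φ`. -/
def Car1 {Z : Type*} [MetricSpace Z] (m : ℤ → ℕ) (φ : Set Z → ℝ≥0∞) (A : Set Z) : ℝ≥0∞ :=
  ⨆ n : ℤ, ⨅ (F : ℕ → Set Z) (_ : A ⊆ ⋃ i, F i) (_ : ∀ i, IsRoundSet m n (F i)),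
    ∑' i, φ (F i)

/-- The shifted gauge `φ̃^ℓ(a) = sup{φ(ã) : (a,ã) an ℓ-ring}`. -/
def shiftedGauge {Z : Type*} [MetricSpace Z] (ℓ : ℤ → ℕ) (φ : Set Z → ℝ≥0∞)
    (a : Set Z) : ℝ≥0∞ :=
  ⨆ (A : Set Z) (_ : ∃ (x : Z) (j : ℤ), closedBall x (Real.exp (-(j : ℝ))) ⊆ a ∧
    a ⊆ A ∧ A ⊆ closedBall x (Real.exp (-((j : ℝ) - ℓ j)))), φ A

/-- A `(k,n)`-outer ring. -/
def IsOuterRing {Z : Type*} [MetricSpace Z] (k : ℤ → ℕ) (n : ℤ) (a : Set Z × Set Z) : Prop :=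
  ∃ (x : Z) (j : ℤ), n ≤ j ∧ a.1 ⊆ closedBall x (Real.exp (-(j : ℝ))) ∧
    closedBall x (Real.exp (-((j : ℝ) - k j))) ⊆ a.2

/-- A `(k,n)`-packing centered on `S`. -/
def IsPackingOn {Z : Type*} [MetricSpace Z] (k : ℤ → ℕ) (n : ℤ) (S : Set Z)
    (P : Set (Set Z × Set Z)) : Prop :=
  P.Countable ∧ (∀ a ∈ P, IsOuterRing k n a ∧ (a.1 ∩ S).Nonempty) ∧
    ∀ a ∈ P, ∀ b ∈ P, (a.2 ∩ b.2).Nonempty → a = b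

/-- The shifted packing pre-measure `PΦ̃^ℓ_{p;k}` associated with a gauge `φ`. -/
def PPhi {Z : Type*} [MetricSpace Z] (p : ℝ) (k ℓ : ℤ → ℕ) (φ : Set Z → ℝ≥0∞)
    (S : Set Z) : ℝ≥0∞ :=
  ⨅ n : ℤ, ⨆ (P : Set (Set Z × Set Z)) (_ : IsPackingOn k n S P),
    ∑' a : P, shiftedGauge ℓ φ (a : Set Z × Set Z).1 ^ p

/-- The oscillation gauge `φ(a) = diam f(a)`. -/
def oscφ {Z : Type*} (f : Z → ℝ) : Set Z → ℝ≥0∞ := fun a => EMetric.diam (f '' a)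

/-- The capacity `cap^ℓ_{p;k}(C)` of a condenser, the infimum of the `p`-variation
`𝐕^ℓ_{p;k}(f)(C) = PΦ̃^ℓ_{p;k}[osc f](C)` over admissible potentials `f`. -/
def capacity {Z : Type*} [MetricSpace Z] (p : ℝ) (k ℓ : ℤ → ℕ)
    (Ω C d0 d1 : Set Z) : ℝ≥0∞ :=
  ⨅ (f : Z → ℝ) (_ : ContinuousOn f Ω ∧
      (∀ Kc : Set Z, Kc ⊆ Ω → IsCompact Kc → PPhi p k ℓ (oscφ f) Kc ≠ ⊤) ∧
      (∀ x ∈ d0, f x ≤ 0) ∧ (∀ x ∈ d1, 1 ≤ f x)),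
    PPhi p k ℓ (oscφ f) C

/-- for a condenser `(C, ∂₀C, ∂₁C)` in an open set `Ω` and a family `Γ`
of curves joining `∂₀C` to `∂₁C` in `C`: any admissible potential `f` gives an
admissible gauge `a ↦ diam f(a)` for `Γ`, and `pmod^{ℓ,m}_{p;k}(Γ) ≤ cap^ℓ_{p;k}(C)`. -/
theorem stmt_11 {Z : Type*} [MetricSpace Z] (p : ℝ) (hp : 1 ≤ p) (k ℓ m : ℤ → ℕ)
    (Ω C d0 d1 : Set Z) (hΩ : IsOpen Ω) (hCsub : closure C ⊆ Ω)
    (hCc : IsCompact (closure C)) (hd0 : IsClosed d0) (hd1 : IsClosed d1)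
    (hdisj : Disjoint d0 d1) (hd0sub : d0 ⊆ closure C \ C) (hd1sub : d1 ⊆ closure C \ C)
    (Γ : Set (Set Z))
    (hΓ : ∀ γ ∈ Γ, ∃ c : ℝ → Z, ContinuousOn c (Icc 0 1) ∧ c 0 ∈ d0 ∧ c 1 ∈ d1 ∧
      γ = c '' Icc 0 1 ∧ γ ⊆ C ∪ d0 ∪ d1) :
    (∀ f : Z → ℝ, ContinuousOn f Ω → (∀ x ∈ d0, f x ≤ 0) → (∀ x ∈ d1, 1 ≤ f x) →
      ∀ γ ∈ Γ, 1 ≤ Car1 m (oscφ f) γ) ∧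
    (⨅ (φ : Set Z → ℝ≥0∞) (_ : ∀ γ ∈ Γ, 1 ≤ Car1 m φ γ), PPhi p k ℓ φ C) ≤
      capacity p k ℓ Ω C d0 d1 := by
  have key : ∀ f : Z → ℝ, ContinuousOn f Ω → (∀ x ∈ d0, f x ≤ 0) → (∀ x ∈ d1, 1 ≤ f x) →
      ∀ γ ∈ Γ, 1 ≤ Car1 m (oscφ f) γ := by
    intro f hf h0 h1 γ hγ
    obtain ⟨c, hc, hc0, hc1, hγeq, hγsub⟩ := hΓ γ hγ
    have hγΩ : γ ⊆ Ω := by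
      intro x hx
      apply hCsub
      rcases hγsub hx with (h | h) | h
      · exact subset_closure h
      · exact (hd0sub h).1
      · exact (hd1sub h).1
    have hfc : ContinuousOn (f ∘ c) (Icc 0 1) :=
      hf.comp hc (fun x hx => hγΩ (hγeq ▸ mem_image_of_mem c hx))
    have hIcc : Icc (0:ℝ) 1 ⊆ f '' γ := by
      have h2 : Icc ((f ∘ c) 0) ((f ∘ c) 1) ⊆ (f ∘ c) '' Icc 0 1 :=
        intermediate_value_Icc (by norm_num) hfc
      intro t ht
      have : t ∈ Icc ((f ∘ c) 0) ((f ∘ c) 1) :=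
        ⟨le_trans (h0 _ hc0) ht.1, le_trans ht.2 (h1 _ hc1)⟩
      obtain ⟨s, hs, hst⟩ := h2 this
      exact ⟨c s, hγeq ▸ mem_image_of_mem c hs, hst⟩
    refine le_trans ?_ (le_iSup _ (0:ℤ))
    refine le_iInf fun F => le_iInf fun hcov => le_iInf fun _ => ?_
    have h3 : Icc (0:ℝ) 1 ⊆ ⋃ i, f '' F i := by
      refine hIcc.trans ?_
      rw [← image_iUnion]
      exact image_mono hcov
    calc (1:ℝ≥0∞) = MeasureTheory.volume (Icc (0:ℝ) 1) := by simp
      _ ≤ MeasureTheory.volume (⋃ i, f '' F i) := MeasureTheory.measure_mono h3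
      _ ≤ ∑' i, MeasureTheory.volume (f '' F i) := MeasureTheory.measure_iUnion_le _
      _ ≤ ∑' i, oscφ f (F i) := ENNReal.tsum_le_tsum fun i => Real.volume_le_diam _
  refine ⟨key, ?_⟩
  unfold capacity
  refine le_iInf fun f => le_iInf fun hf => ?_
  exact iInf₂_le (oscφ f) (fun γ hγ => key f hf.1 hf.2.2.1 hf.2.2.2 γ hγ)
end
end

section
/- Let α be a diagonalizable linear map on ℝ^d with positive real eigenvalues, let λ > 0 and v ∈ ker(α − λ) nonzero. Consider the family Γ_v of lines parallel to v with the translation-invariant measure ω_v on the quotient ℝ^d/ℝv. Then for any Borel set A of lines, ω_v(e^{tα}A) = e^{t(tr(α) − λ)}·ω_v(A) for all t ∈ ℝ. -/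
open MeasureTheory

variable {d : ℕ}
local notation "E" => EuclideanSpace ℝ (Fin d)

lemma exp_smul_eigen (α : EuclideanSpace ℝ (Fin d) →L[ℝ] EuclideanSpace ℝ (Fin d))
    (t c : ℝ) (x : EuclideanSpace ℝ (Fin d)) (h : α x = c • x) :
    NormedSpace.exp (t • α) x = Real.exp (t * c) • x := by
  have hpow : ∀ n : ℕ, ((t • α) ^ n) x = (t * c) ^ n • x := by
    intro n
    induction n with
    | zero => simp
    | succ n ih =>
      have h1 : (t • α) x = (t * c) • x := by
        simp [h, smul_smul]
      calc ((t • α) ^ (n+1)) x = ((t • α) ^ n) ((t • α) x) := by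
            rw [pow_succ]; rfl
        _ = ((t • α) ^ n) ((t * c) • x) := by rw [h1]
        _ = (t * c) • (((t • α) ^ n) x) := map_smul _ _ _
        _ = (t * c) ^ (n+1) • x := by
            rw [ih, smul_smul, pow_succ, mul_comm ((t*c)^n)]
  have hsum : Summable fun n : ℕ => ((n.factorial : ℝ)⁻¹) • (t • α) ^ n :=
    NormedSpace.expSeries_summable' (𝕂 := ℝ) (t • α)
  have h1 : NormedSpace.exp (t • α) x
      = ∑' n : ℕ, ((n.factorial : ℝ)⁻¹) • (((t • α) ^ n) x) := by
    rw [NormedSpace.exp_eq_tsum ℝ]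
    exact ((ContinuousLinearMap.apply ℝ _ x).map_tsum hsum).trans (by simp)
  have hsum2 : Summable fun n : ℕ => ((n.factorial : ℝ)⁻¹) * (t * c) ^ n := by
    simpa [smul_eq_mul] using NormedSpace.expSeries_summable' (𝕂 := ℝ) (t * c)
  calc NormedSpace.exp (t • α) x
      = ∑' n : ℕ, (((n.factorial : ℝ)⁻¹) * (t * c) ^ n) • x := by
        rw [h1]; congr 1; funext n; rw [hpow n, smul_smul]
    _ = (∑' n : ℕ, ((n.factorial : ℝ)⁻¹) * (t * c) ^ n) • x := hsum2.tsum_smul_const x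
    _ = Real.exp (t * c) • x := by
        congr 1
        rw [Real.exp_eq_exp_ℝ, NormedSpace.exp_eq_tsum ℝ]
        simp [smul_eq_mul]

lemma my_det_prodMap {M N : Type*} [AddCommGroup M] [Module ℝ M] [AddCommGroup N] [Module ℝ N]
    [FiniteDimensional ℝ M] [FiniteDimensional ℝ N] (f : M →ₗ[ℝ] M) (g : N →ₗ[ℝ] N) :
    LinearMap.det (f.prodMap g) = LinearMap.det f * LinearMap.det g := by
  classical
  let bM := Module.finBasis ℝ M
  let bN := Module.finBasis ℝ N
  rw [← LinearMap.det_toMatrix (bM.prod bN), LinearMap.toMatrix_prodMap,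
    Matrix.det_fromBlocks_zero₂₁, LinearMap.det_toMatrix, LinearMap.det_toMatrix]

lemma my_toMatrix_diag {n : ℕ} (b : Module.Basis (Fin n) ℝ (EuclideanSpace ℝ (Fin n)))
    (g : EuclideanSpace ℝ (Fin n) →ₗ[ℝ] EuclideanSpace ℝ (Fin n)) (c : Fin n → ℝ)
    (h : ∀ i, g (b i) = c i • b i) :
    LinearMap.toMatrix b b g = Matrix.diagonal c := by
  ext i j
  rw [LinearMap.toMatrix_apply, h j, _root_.map_smul, Module.Basis.repr_self]
  simp [Matrix.diagonal_apply, Finsupp.single_apply, eq_comm]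
  split <;> simp_all

/-- equivariance of the measure on the family of eigencurves. If `α` is
diagonalizable with positive eigenvalues, `v` an eigenvector for the eigenvalue `λ`,
and `W` an `α`-invariant complement of `ℝv` (parametrizing the lines parallel to `v`),
then any additive Haar measure `ω_v` on `W` satisfies
`ω_v(e^{tα} A) = e^{t(tr α − λ)} ω_v(A)`. -/
theorem stmt_13 {d : ℕ}
    (α : EuclideanSpace ℝ (Fin d) →L[ℝ] EuclideanSpace ℝ (Fin d))
    (hdiag : ∃ (b : Module.Basis (Fin d) ℝ (EuclideanSpace ℝ (Fin d))) (μs : Fin d → ℝ),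
      (∀ i, 0 < μs i) ∧ ∀ i, α (b i) = μs i • b i)
    (lam : ℝ) (hlam : 0 < lam)
    (v : EuclideanSpace ℝ (Fin d)) (hv : v ≠ 0) (hEig : α v = lam • v)
    (W : Submodule ℝ (EuclideanSpace ℝ (Fin d)))
    (hWinv : ∀ x ∈ W, α x ∈ W)
    (hcompl : IsCompl W (Submodule.span ℝ {v}))
    (hExpInv : ∀ (t : ℝ), ∀ x ∈ W, (NormedSpace.exp (t • α)) x ∈ W)
    (μ : Measure W) [μ.IsAddHaarMeasure] (t : ℝ) (A : Set W) (hA : MeasurableSet A) :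
    μ ((fun w : W => (⟨NormedSpace.exp (t • α) (w : EuclideanSpace ℝ (Fin d)),
        hExpInv t w w.2⟩ : W)) '' A) =
      ENNReal.ofReal (Real.exp (t * (LinearMap.trace ℝ (EuclideanSpace ℝ (Fin d))
        α.toLinearMap - lam))) * μ A := by
  classical
  obtain ⟨b, μs, hpos, hb⟩ := hdiag
  set f := NormedSpace.exp (t • α) with hf
  set trα := LinearMap.trace ℝ (EuclideanSpace ℝ (Fin d)) α.toLinearMap with htr
  -- trace of α
  have htrace : trα = ∑ i, μs i := by
    rw [htr, LinearMap.trace_eq_matrix_trace ℝ b,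
      my_toMatrix_diag b α.toLinearMap μs hb, Matrix.trace_diagonal]
  -- exp on eigenvectors of basis
  have hfb : ∀ i, f.toLinearMap (b i) = Real.exp (t * μs i) • b i := fun i =>
    exp_smul_eigen α t (μs i) (b i) (hb i)
  -- det of f
  have hdetf : LinearMap.det f.toLinearMap = Real.exp (t * trα) := by
    rw [← LinearMap.det_toMatrix b, my_toMatrix_diag b f.toLinearMap
      (fun i => Real.exp (t * μs i)) hfb, Matrix.det_diagonal, htrace,
      Finset.mul_sum, Real.exp_sum]
  -- the span of v
  set U := Submodule.span ℝ {v} with hU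
  have hvU : v ∈ U := Submodule.mem_span_singleton_self v
  have hfv : ∀ x ∈ U, f x = Real.exp (t * lam) • x := by
    intro x hx
    obtain ⟨c, rfl⟩ := Submodule.mem_span_singleton.1 hx
    have : α (c • v) = lam • (c • v) := by
      rw [_root_.map_smul, hEig, smul_comm]
    exact exp_smul_eigen α t lam (c • v) this
  have hUinv : ∀ x ∈ U, f x ∈ U := by
    intro x hx
    rw [hfv x hx]
    exact U.smul_mem _ hx
  -- restrictions
  set fW := f.toLinearMap.restrict (hExpInv t) with hfW
  set fU := f.toLinearMap.restrict hUinv with hfU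
  -- conjugation identity
  set e := Submodule.prodEquivOfIsCompl W U hcompl with he
  have hconj : f.toLinearMap = (e : W × U →ₗ[ℝ] EuclideanSpace ℝ (Fin d)) ∘ₗ
      (fW.prodMap fU) ∘ₗ (e.symm : EuclideanSpace ℝ (Fin d) →ₗ[ℝ] W × U) := by
    apply LinearMap.ext
    intro x
    obtain ⟨p, rfl⟩ := e.surjective x
    simp only [LinearMap.comp_apply, LinearEquiv.coe_coe, LinearEquiv.symm_apply_apply]
    obtain ⟨w, u⟩ := p
    show f.toLinearMap ((w : EuclideanSpace ℝ (Fin d)) + (u : EuclideanSpace ℝ (Fin d)))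
      = ((fW w : EuclideanSpace ℝ (Fin d)) + (fU u : EuclideanSpace ℝ (Fin d)))
    rw [map_add]
    rfl
  have hdetfU : LinearMap.det fU = Real.exp (t * lam) := by
    have : fU = (Real.exp (t * lam)) • (LinearMap.id : U →ₗ[ℝ] U) := by
      apply LinearMap.ext
      rintro ⟨x, hx⟩
      apply Subtype.ext
      simp only [LinearMap.restrict_apply, LinearMap.smul_apply, LinearMap.id_apply,
        SetLike.val_smul]
      exact hfv x hx
    rw [this, LinearMap.det_smul, LinearMap.det_id, mul_one,
      finrank_span_singleton hv, pow_one]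
  have hdetfW : LinearMap.det fW = Real.exp (t * (trα - lam)) := by
    have h1 : LinearMap.det f.toLinearMap = LinearMap.det fW * LinearMap.det fU := by
      rw [hconj, LinearMap.det_conj, my_det_prodMap]
    rw [hdetf, hdetfU] at h1
    have h2 : Real.exp (t * trα) = Real.exp (t * (trα - lam)) * Real.exp (t * lam) := by
      rw [← Real.exp_add]; ring_nf
    rw [h2] at h1
    exact (mul_right_cancel₀ (Real.exp_ne_zero _) h1.symm)
  -- the measure computation
  have himg : (fun w : W => (⟨f (w : EuclideanSpace ℝ (Fin d)), hExpInv t w w.2⟩ : W)) = ⇑fW := by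
    funext w
    rfl
  rw [himg, Measure.addHaar_image_linearMap, hdetfW,
    abs_of_pos (Real.exp_pos _)]
end

section
/- Let α = diag(μ₁,...,μ_d) be a diagonal matrix with all μ_i ≥ 1, fix i, and let f : ℝ^d → ℝ be the i-th coordinate function. Equip ℝ^d with the family of boxes b̂ = x + e^{-nα}([−1/2,1/2]^d). Then for p > tr(α)/μ_i, ε > 0 with p = (1+ε)tr(α)/μ_i, any sublinear ℓ, and n large enough: for every finite family of disjoint boxes {b̂_j} of levels ≥ n all meeting [−1/2,1/2]^d, Σ_j (e^{ℓ(δ(b_j))}·osc(f, b̂_j))^p ≤ 2^d. In particular the coordinate function f has locally bounded (p; k, ℓ)-variation for all such p. -/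
open Filter Set

noncomputable section

/-- The box `x + e^{-nα}([-1/2,1/2]^d)` for the diagonal matrix `α = diag(μvec)`. -/
def boxAt {d : ℕ} (μvec : Fin d → ℝ) (x : Fin d → ℝ) (n : ℤ) : Set (Fin d → ℝ) :=
  (fun y => x + fun j => Real.exp (-(n : ℝ) * μvec j) * y j) ''
    {y : Fin d → ℝ | ∀ j, y j ∈ Icc (-(1 : ℝ) / 2) (1 / 2)}

lemma boxAt_eq_pi {d : ℕ} (μvec : Fin d → ℝ) (x : Fin d → ℝ) (n : ℤ) :
    boxAt μvec x n = Set.pi Set.univ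
      (fun j => Icc (x j - Real.exp (-(n : ℝ) * μvec j) / 2)
        (x j + Real.exp (-(n : ℝ) * μvec j) / 2)) := by
  ext z
  constructor
  · rintro ⟨y, hy, rfl⟩ j -
    have hc : 0 < Real.exp (-(n : ℝ) * μvec j) := Real.exp_pos _
    have h1 := (hy j).1
    have h2 := (hy j).2
    simp only [Pi.add_apply, mem_Icc]
    constructor <;> nlinarith
  · intro hz
    refine ⟨fun j => (z j - x j) / Real.exp (-(n : ℝ) * μvec j), fun j => ?_, ?_⟩
    · have hc : 0 < Real.exp (-(n : ℝ) * μvec j) := Real.exp_pos _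
      have h := hz j (mem_univ j)
      simp only [mem_Icc] at h ⊢
      rw [le_div_iff₀ hc, div_le_iff₀ hc]
      constructor <;> nlinarith
    · funext j
      have hc : Real.exp (-(n : ℝ) * μvec j) ≠ 0 := (Real.exp_pos _).ne'
      simp only [Pi.add_apply]
      field_simp
      ring

lemma eval_image_box {d : ℕ} (μvec : Fin d → ℝ) (x : Fin d → ℝ) (n : ℤ) (i₀ : Fin d) :
    (fun y : Fin d → ℝ => y i₀) '' boxAt μvec x n =
      Icc (x i₀ - Real.exp (-(n : ℝ) * μvec i₀) / 2)
        (x i₀ + Real.exp (-(n : ℝ) * μvec i₀) / 2) := by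
  rw [boxAt_eq_pi]
  exact Set.eval_image_univ_pi ⟨x, fun j => by
    have hc : 0 < Real.exp (-(n : ℝ) * μvec j) := Real.exp_pos _
    intro _; simp only [mem_Icc]; constructor <;> linarith⟩

/-- with `α = diag(μ₁,…,μ_d)`, all `μ_i ≥ 1`, `f` the `i₀`-th coordinate
function, `p = (1+ε)·tr(α)/μ_{i₀}` and `ℓ` sublinear, for `n` large enough every finite
disjoint family of boxes of levels `≥ n` meeting `[-1/2,1/2]^d` satisfies
`Σ (e^{ℓ(level)}·osc(f, box))^p ≤ 2^d`. -/
theorem stmt_16 (d : ℕ) (μvec : Fin d → ℝ) (hμ : ∀ i, 1 ≤ μvec i) (i₀ : Fin d)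
    (ε : ℝ) (hε : 0 < ε) (p : ℝ) (hp : p = (1 + ε) * (∑ i, μvec i) / μvec i₀)
    (ℓ : ℤ → ℕ) (hℓ : Tendsto (fun n : ℤ => (ℓ n : ℝ) / n) atTop (nhds 0)) :
    ∃ N : ℤ, ∀ n : ℤ, N ≤ n →
      ∀ (s : Finset ℕ) (x : ℕ → Fin d → ℝ) (lev : ℕ → ℤ),
        (∀ i ∈ s, n ≤ lev i) →
        (∀ i ∈ s, (boxAt μvec (x i) (lev i) ∩
          {y : Fin d → ℝ | ∀ j, y j ∈ Icc (-(1 : ℝ) / 2) (1 / 2)}).Nonempty) →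
        (∀ i ∈ s, ∀ j ∈ s, i ≠ j →
          Disjoint (boxAt μvec (x i) (lev i)) (boxAt μvec (x j) (lev j))) →
        ∑ i ∈ s, (Real.exp (ℓ (lev i)) *
            Metric.diam ((fun y : Fin d → ℝ => y i₀) '' boxAt μvec (x i) (lev i))) ^ p
          ≤ (2 : ℝ) ^ d := by
  have hd : 0 < d := i₀.pos
  set T : ℝ := ∑ i, μvec i with hT
  have hT1 : (1 : ℝ) ≤ T := by
    calc (1 : ℝ) ≤ (d : ℝ) := by exact_mod_cast hd
    _ = ∑ _i : Fin d, (1 : ℝ) := by simp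
    _ ≤ T := Finset.sum_le_sum fun i _ => hμ i
  have hμ₀ : (0 : ℝ) < μvec i₀ := lt_of_lt_of_le one_pos (hμ i₀)
  have hp0 : 0 < p := by rw [hp]; positivity
  have hpμ : p * μvec i₀ = (1 + ε) * T := by
    rw [hp]; field_simp
  have hδ : (0 : ℝ) < ε * T / p := by positivity
  obtain ⟨N₀, hN₀⟩ := (eventually_atTop).mp (hℓ.eventually_lt_const hδ)
  refine ⟨max N₀ 1, fun n hn s x lev hlev hmeet hdisj => ?_⟩
  -- per-term bound
  have key : ∀ i ∈ s, (Real.exp (ℓ (lev i)) *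
      Metric.diam ((fun y : Fin d → ℝ => y i₀) '' boxAt μvec (x i) (lev i))) ^ p
      ≤ Real.exp (-(lev i : ℝ) * T) := by
    intro i hi
    have hm1 : (1 : ℤ) ≤ lev i := le_trans (le_trans (le_max_right N₀ 1) hn) (hlev i hi)
    have hm1' : (1 : ℝ) ≤ (lev i : ℝ) := by exact_mod_cast hm1
    have hmN : (ℓ (lev i) : ℝ) / (lev i : ℝ) < ε * T / p :=
      hN₀ _ (le_trans (le_trans (le_max_left N₀ 1) hn) (hlev i hi))
    have hℓm : (ℓ (lev i) : ℝ) < (lev i : ℝ) * (ε * T / p) := by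
      rw [div_lt_iff₀ (by linarith)] at hmN; linarith [hmN]
    have hpl : p * (ℓ (lev i) : ℝ) ≤ (lev i : ℝ) * (ε * T) := by
      have h := mul_lt_mul_of_pos_left hℓm hp0
      have hc : p * ((lev i : ℝ) * (ε * T / p)) = (lev i : ℝ) * (ε * T) := by
        field_simp
      rw [hc] at h
      linarith
    rw [eval_image_box, Real.diam_Icc (by linarith [Real.exp_pos (-(lev i : ℝ) * μvec i₀)])]
    have hdiam : x i i₀ + Real.exp (-(lev i : ℝ) * μvec i₀) / 2 -
        (x i i₀ - Real.exp (-(lev i : ℝ) * μvec i₀) / 2) =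
        Real.exp (-(lev i : ℝ) * μvec i₀) := by ring
    rw [hdiam, ← Real.exp_add, ← Real.exp_mul, Real.exp_le_exp]
    nlinarith [hpμ, hpl]
  refine le_trans (Finset.sum_le_sum key) ?_
  -- volume argument
  have hvol : ∀ i : ℕ, MeasureTheory.volume (boxAt μvec (x i) (lev i)) =
      ENNReal.ofReal (Real.exp (-(lev i : ℝ) * T)) := by
    intro i
    rw [boxAt_eq_pi, MeasureTheory.volume_pi_pi]
    have : ∀ j : Fin d, MeasureTheory.volume
        (Icc (x i j - Real.exp (-(lev i : ℝ) * μvec j) / 2)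
          (x i j + Real.exp (-(lev i : ℝ) * μvec j) / 2)) =
        ENNReal.ofReal (Real.exp (-(lev i : ℝ) * μvec j)) := by
      intro j; rw [Real.volume_Icc]; ring_nf
    simp_rw [this]
    rw [← ENNReal.ofReal_prod_of_nonneg (fun j _ => (Real.exp_pos _).le),
      ← Real.exp_sum, ← Finset.mul_sum]
  have hmeas : ∀ i : ℕ, MeasurableSet (boxAt μvec (x i) (lev i)) := by
    intro i
    rw [boxAt_eq_pi]
    exact MeasurableSet.univ_pi fun j => measurableSet_Icc
  have hsub : ∀ i ∈ s, boxAt μvec (x i) (lev i) ⊆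
      Set.pi Set.univ (fun _ : Fin d => Icc (-1 : ℝ) 1) := by
    intro i hi
    obtain ⟨z, hzb, hz⟩ := hmeet i hi
    have hm1 : (1 : ℤ) ≤ lev i := le_trans (le_trans (le_max_right N₀ 1) hn) (hlev i hi)
    have hm1' : (1 : ℝ) ≤ (lev i : ℝ) := by exact_mod_cast hm1
    intro w hw j _
    rw [boxAt_eq_pi] at hzb hw
    have hzj := hzb j (mem_univ j)
    have hwj := hw j (mem_univ j)
    have hzc := hz j
    simp only [mem_Icc] at hzj hwj hzc ⊢
    have hce : Real.exp (-(lev i : ℝ) * μvec j) ≤ Real.exp (-1 : ℝ) := by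
      apply Real.exp_le_exp.mpr
      nlinarith [hμ j]
    have h2e : (2 : ℝ) ≤ Real.exp 1 := by
      have := Real.add_one_le_exp (1 : ℝ); linarith
    have hch : Real.exp (-1 : ℝ) ≤ 1 / 2 := by
      rw [Real.exp_neg]
      have h1 := mul_inv_cancel₀ (Real.exp_pos 1).ne'
      nlinarith [Real.exp_pos (1 : ℝ), (Real.exp_pos (1:ℝ)).le]
    constructor <;> nlinarith
  -- sum of volumes
  have hdisj' : (↑s : Set ℕ).PairwiseDisjoint
      (fun i => boxAt μvec (x i) (lev i)) := by
    intro i hi j hj hij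
    exact hdisj i hi j hj hij
  have hle : ∑ i ∈ s, MeasureTheory.volume (boxAt μvec (x i) (lev i)) ≤
      (2 : ENNReal) ^ d := by
    rw [← MeasureTheory.measure_biUnion_finset hdisj' fun i _ => hmeas i]
    refine le_trans (MeasureTheory.measure_mono (Set.iUnion₂_subset hsub)) ?_
    rw [MeasureTheory.volume_pi_pi]
    simp [Real.volume_Icc]
    norm_num
  rw [← ENNReal.ofReal_le_ofReal_iff (by positivity),
    ENNReal.ofReal_sum_of_nonneg (fun i _ => (Real.exp_pos _).le)]
  simp_rw [← hvol]
  refine le_trans hle ?_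
  rw [ENNReal.ofReal_pow (by norm_num)]
  norm_num
end
end
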